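/- For $0 < T \le 2$, $\sup_{f \in \mathcal{L}_2(T)} \int_0^T |f'(t)|\, dt = 2$. -/

import Mathlib

open Set MeasureTheory intervalIntegral

/-- Membership in Landau's class `𝓛₂(T)`. -/
def InL2 (T : ℝ) (f f' : ℝ → ℝ) : Prop :=
  (∀ t ∈ Icc 0 T, HasDerivWithinAt f (f' t) (Icc 0 T) t) ∧
  (∀ t ∈ Icc 0 T, |f t| ≤ 1) ∧
  LipschitzOnWith 1 f' (Icc 0 T)

/-- For `0 < T ≤ 2`, the supremum of the total variation
`∫₀ᵀ |f'(t)| dt` over `f ∈ 𝓛₂(T)` equals `2` (and it is attained). -/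
theorem total_variation_sup_small_T (T : ℝ) (hT0 : 0 < T) (hT2 : T ≤ 2) :
    IsGreatest {y : ℝ | ∃ f f' : ℝ → ℝ, InL2 T f f' ∧
        y = ∫ t in (0:ℝ)..T, |f' t|} 2 := by
  constructor
  · -- attained by f(t) = (2/T) t - 1
    refine ⟨fun t => (2/T) * t - 1, fun _ => 2/T, ⟨?_, ?_, ?_⟩, ?_⟩
    · intro t ht
      have h := (((hasDerivAt_id t).const_mul (2/T)).sub_const 1).hasDerivWithinAt
        (s := Icc 0 T)
      simpa using h
    · intro t ht
      obtain ⟨ht0, htT⟩ := ht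
      rw [abs_le]
      have h2T : 0 < 2/T := div_pos two_pos hT0
      constructor
      · nlinarith [mul_nonneg h2T.le ht0]
      · have : 2/T * t ≤ 2/T * T := mul_le_mul_of_nonneg_left htT h2T.le
        have hTT : 2/T * T = 2 := by field_simp
        linarith
    · exact ((LipschitzWith.const (α := ℝ) (2/T)).weaken (by norm_num)).lipschitzOnWith
    · rw [intervalIntegral.integral_const, smul_eq_mul,
        abs_of_pos (div_pos two_pos hT0)]
      field_simp
      ring
  · rintro y ⟨f, f', ⟨hderiv, hbound, hlip⟩, rfl⟩
    have hf'cont : ContinuousOn f' (Icc 0 T) := hlip.continuousOn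
    have hint : IntervalIntegrable (fun t => |f' t|) volume 0 T :=
      hf'cont.abs.intervalIntegrable_of_Icc hT0.le
    by_cases hz : ∃ t₀ ∈ Icc 0 T, f' t₀ = 0
    · obtain ⟨t₀, ht₀, hz0⟩ := hz
      have hbd : ∀ t ∈ Icc 0 T, |f' t| ≤ |t - t₀| := by
        intro t ht
        have := hlip.dist_le_mul t ht t₀ ht₀
        simpa [Real.dist_eq, hz0] using this
      have hint2 : IntervalIntegrable (fun t => |t - t₀|) volume 0 T :=
        (Continuous.intervalIntegrable (by continuity) 0 T)
      have hintA : IntervalIntegrable (fun t => |t - t₀|) volume 0 t₀ :=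
        (Continuous.intervalIntegrable (by continuity) 0 t₀)
      have hintB : IntervalIntegrable (fun t => |t - t₀|) volume t₀ T :=
        (Continuous.intervalIntegrable (by continuity) t₀ T)
      have hstep : (∫ t in (0:ℝ)..T, |f' t|) ≤ ∫ t in (0:ℝ)..T, |t - t₀| := by
        apply intervalIntegral.integral_mono_on hT0.le hint hint2
        exact hbd
      have h1 : (∫ t in (0:ℝ)..t₀, |t - t₀|) = t₀^2/2 := by
        rw [intervalIntegral.integral_congr (g := fun t => t₀ - t)
          (by
            intro t ht
            rw [uIcc_of_le ht₀.1] at ht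
            show |t - t₀| = t₀ - t
            rw [abs_of_nonpos (by linarith [ht.2])]
            ring)]
        rw [intervalIntegral.integral_sub intervalIntegrable_const
          intervalIntegrable_id]
        simp
        ring
      have h2 : (∫ t in t₀..T, |t - t₀|) = (T - t₀)^2/2 := by
        rw [intervalIntegral.integral_congr (g := fun t => t - t₀)
          (by
            intro t ht
            rw [uIcc_of_le ht₀.2] at ht
            show |t - t₀| = t - t₀
            exact abs_of_nonneg (by linarith [ht.1]))]
        rw [intervalIntegral.integral_sub intervalIntegrable_id
          intervalIntegrable_const]
        simp
        ring
      have hsplit : (∫ t in (0:ℝ)..T, |t - t₀|) = t₀^2/2 + (T - t₀)^2/2 := by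
        rw [← intervalIntegral.integral_add_adjacent_intervals hintA hintB, h1, h2]
      have : t₀^2/2 + (T - t₀)^2/2 ≤ 2 := by
        nlinarith [mul_nonneg ht₀.1 (sub_nonneg.2 ht₀.2), ht₀.1, ht₀.2]
      linarith [hstep, hsplit ▸ hstep]
    · push_neg at hz
      have hsign : (∀ t ∈ Icc 0 T, 0 < f' t) ∨ (∀ t ∈ Icc 0 T, f' t < 0) := by
        by_contra h
        push_neg at h
        obtain ⟨⟨a, ha, ha'⟩, ⟨b, hb, hb'⟩⟩ := h
        have hsub : uIcc a b ⊆ Icc 0 T := uIcc_subset_Icc ha hb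
        have : (0:ℝ) ∈ f' '' uIcc a b := by
          apply intermediate_value_uIcc (hf'cont.mono hsub)
          rw [mem_uIcc]
          left
          exact ⟨ha', hb'⟩
        obtain ⟨c, hc, hc0⟩ := this
        exact hz c (hsub hc) hc0
      have ftc : (∫ t in (0:ℝ)..T, f' t) = f T - f 0 := by
        apply intervalIntegral.integral_eq_sub_of_hasDeriv_right_of_le hT0.le
        · intro t ht
          exact (hderiv t ht).continuousWithinAt
        · intro t ht
          exact ((hderiv t (Ioo_subset_Icc_self ht)).hasDerivAt
            (Icc_mem_nhds ht.1 ht.2)).hasDerivWithinAt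
        · exact hf'cont.intervalIntegrable_of_Icc hT0.le
      have hb0 := abs_le.1 (hbound 0 (left_mem_Icc.2 hT0.le))
      have hbT := abs_le.1 (hbound T (right_mem_Icc.2 hT0.le))
      rcases hsign with hpos | hneg
      · have heq : (∫ t in (0:ℝ)..T, |f' t|) = ∫ t in (0:ℝ)..T, f' t := by
          apply intervalIntegral.integral_congr
          intro t ht
          rw [uIcc_of_le hT0.le] at ht
          exact abs_of_pos (hpos t ht)
        rw [heq, ftc]
        linarith [hb0.1, hbT.2]
      · have heq : (∫ t in (0:ℝ)..T, |f' t|) = ∫ t in (0:ℝ)..T, -f' t := by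
          apply intervalIntegral.integral_congr
          intro t ht
          rw [uIcc_of_le hT0.le] at ht
          exact abs_of_neg (hneg t ht)
        rw [heq, intervalIntegral.integral_neg, ftc]
        linarith [hb0.2, hbT.1]
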